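/- For x > a, W'(x) := ρ₂⁺(c₁e^{-ρ₂⁻a} + (1-c₁)e^{-ρ₁⁻a})(1-c₂)e^{ρ₂⁺(x-a)} - ρ₁⁺((1-c₁c₂)e^{-ρ₂⁻a} - c₂(1-c₁)e^{-ρ₁⁻a})e^{ρ₁⁺(x-a)} is strictly positive. -/

import Mathlib

theorem W_deriv_pos_above_a (q a μp μm β : ℝ) (hq : 0 < q) (ha : 0 < a)
    (hβ : β ∈ Set.Ioo (-1 : ℝ) 1)
    (ρ1m ρ2m ρ1p ρ2p c₁ c₂ : ℝ)
    (hρ1m : ρ1m = -(μm + Real.sqrt (μm^2 + 2*q)))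
    (hρ2m : ρ2m = -μm + Real.sqrt (μm^2 + 2*q))
    (hρ1p : ρ1p = -(μp + Real.sqrt (μp^2 + 2*q)))
    (hρ2p : ρ2p = -μp + Real.sqrt (μp^2 + 2*q))
    (hc₁ : c₁ = ((1+β)*ρ1p - (1-β)*ρ1m) / ((1-β)*(ρ2m - ρ1m)))
    (hc₂ : c₂ = ((1+β)*ρ2p - (1-β)*ρ2m) / ((1+β)*(ρ2p - ρ1p))) :
    ∀ x, a < x →
      0 < ρ2p * (c₁ * Real.exp (-ρ2m*a) + (1-c₁) * Real.exp (-ρ1m*a)) * (1-c₂) *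
            Real.exp (ρ2p*(x-a))
        - ρ1p * ((1-c₁*c₂) * Real.exp (-ρ2m*a) - c₂*(1-c₁) * Real.exp (-ρ1m*a)) *
            Real.exp (ρ1p*(x-a)) := by
  obtain ⟨hβ1, hβ2⟩ := hβ
  have h1m : (0:ℝ) < 1 - β := by linarith
  have h1p : (0:ℝ) < 1 + β := by linarith
  have hsp : |μp| < Real.sqrt (μp^2 + 2*q) := by
    rw [← Real.sqrt_sq_eq_abs]
    exact Real.sqrt_lt_sqrt (sq_nonneg _) (by linarith)
  have hsm : |μm| < Real.sqrt (μm^2 + 2*q) := by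
    rw [← Real.sqrt_sq_eq_abs]
    exact Real.sqrt_lt_sqrt (sq_nonneg _) (by linarith)
  obtain ⟨hsp1, hsp2⟩ := abs_lt.mp hsp
  obtain ⟨hsm1, hsm2⟩ := abs_lt.mp hsm
  have hρ1p_neg : ρ1p < 0 := by rw [hρ1p]; linarith
  have hρ2p_pos : 0 < ρ2p := by rw [hρ2p]; linarith
  have hρ1m_neg : ρ1m < 0 := by rw [hρ1m]; linarith
  have hρ2m_pos : 0 < ρ2m := by rw [hρ2m]; linarith
  have hρp : ρ1p < ρ2p := lt_trans hρ1p_neg hρ2p_pos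
  have hρm : ρ1m < ρ2m := lt_trans hρ1m_neg hρ2m_pos
  -- c₁ < 1
  have hdenm : 0 < (1-β)*(ρ2m - ρ1m) := mul_pos h1m (by linarith)
  have hc1lt : c₁ < 1 := by
    rw [hc₁, div_lt_one hdenm]
    nlinarith [mul_pos h1p (neg_pos.mpr hρ1p_neg)]
  -- c₂ < 1
  have hdenp : 0 < (1+β)*(ρ2p - ρ1p) := mul_pos h1p (by linarith)
  have hc2lt : c₂ < 1 := by
    rw [hc₂, div_lt_one hdenp]
    nlinarith [mul_pos h1p (neg_pos.mpr hρ1p_neg), mul_pos h1m hρ2m_pos]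
  -- key identity
  have hkey : ρ2p - c₂*(ρ2p - ρ1p) = (1-β)*ρ2m/(1+β) := by
    rw [hc₂]
    have hne1 : (1+β) ≠ 0 := ne_of_gt h1p
    have hne2 : ρ2p - ρ1p ≠ 0 := sub_ne_zero.mpr (ne_of_gt hρp)
    field_simp
    ring
  have E2pos := Real.exp_pos (-ρ2m*a)
  have E1pos := Real.exp_pos (-ρ1m*a)
  have hE : Real.exp (-ρ2m*a) < Real.exp (-ρ1m*a) := by
    apply Real.exp_lt_exp.mpr
    nlinarith
  set E2 := Real.exp (-ρ2m*a)
  set E1 := Real.exp (-ρ1m*a)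
  have hA : 0 < c₁ * E2 + (1-c₁) * E1 := by
    nlinarith [mul_pos (by linarith : (0:ℝ) < 1 - c₁) (sub_pos.mpr hE)]
  have hP : 0 < ρ2p * (c₁ * E2 + (1-c₁) * E1) * (1-c₂) :=
    mul_pos (mul_pos hρ2p_pos hA) (by linarith)
  have hPQ : 0 < ρ2p * (c₁ * E2 + (1-c₁) * E1) * (1-c₂)
      + -(ρ1p * ((1-c₁*c₂) * E2 - c₂*(1-c₁) * E1)) := by
    have hid : ρ2p * (c₁ * E2 + (1-c₁) * E1) * (1-c₂)
        + -(ρ1p * ((1-c₁*c₂) * E2 - c₂*(1-c₁) * E1))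
        = (c₁ * E2 + (1-c₁) * E1) * (ρ2p - c₂*(ρ2p - ρ1p)) - ρ1p * E2 := by ring
    rw [hid, hkey]
    have h1 : 0 < (c₁ * E2 + (1-c₁) * E1) * ((1-β)*ρ2m/(1+β)) :=
      mul_pos hA (div_pos (mul_pos h1m hρ2m_pos) h1p)
    linarith [mul_pos (neg_pos.mpr hρ1p_neg) E2pos]
  intro x hx
  have he : Real.exp (ρ1p*(x-a)) < Real.exp (ρ2p*(x-a)) := by
    apply Real.exp_lt_exp.mpr
    exact mul_lt_mul_of_pos_right hρp (by linarith)
  have he1 := Real.exp_pos (ρ1p*(x-a))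
  set e1 := Real.exp (ρ1p*(x-a))
  set e2 := Real.exp (ρ2p*(x-a))
  have hid2 : ρ2p * (c₁ * E2 + (1-c₁) * E1) * (1-c₂) * e2
      - ρ1p * ((1-c₁*c₂) * E2 - c₂*(1-c₁) * E1) * e1
      = ρ2p * (c₁ * E2 + (1-c₁) * E1) * (1-c₂) * (e2 - e1)
      + (ρ2p * (c₁ * E2 + (1-c₁) * E1) * (1-c₂)
         + -(ρ1p * ((1-c₁*c₂) * E2 - c₂*(1-c₁) * E1))) * e1 := by ring
  rw [hid2]
  have := mul_pos hP (sub_pos.mpr he)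
  linarith [mul_pos hPQ he1]
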